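/- Let n(d) ≥ d be such that d/n(d) → δ as d → ∞ with δ ∈ (1/2, 1]. Then (1/d)·E[(d - Bin(n(d), 1/2))·1{Bin(n(d),1/2) ≤ d}] → 1 - 1/(2δ) as d → ∞. -/

import Mathlib

open Filter Finset

lemma my_choose_le_two_pow (n k : ℕ) : n.choose k ≤ 2 ^ n := by
  rcases le_or_gt k n with h | h
  · calc n.choose k ≤ ∑ i ∈ range (n + 1), n.choose i :=
        Finset.single_le_sum (fun i _ => Nat.zero_le _) (by simp [Nat.lt_succ_iff, h])
    _ = 2 ^ n := Nat.sum_range_choose n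
  · simp [Nat.choose_eq_zero_of_lt h]

lemma my_sum_id_mul_choose (n : ℕ) :
    ∑ l ∈ range (n + 1), (l : ℝ) * n.choose l = n * 2 ^ n / 2 := by
  have hrefl := Finset.sum_range_reflect (fun l => (l : ℝ) * n.choose l) (n + 1)
  have h2 : ∑ l ∈ range (n + 1), ((n - l : ℕ) : ℝ) * n.choose (n - l)
      = ∑ l ∈ range (n + 1), (l : ℝ) * n.choose l := by
    simpa using hrefl
  have h3 : ∀ l ∈ range (n + 1), ((n - l : ℕ) : ℝ) * n.choose (n - l)
      = ((n : ℝ) - l) * n.choose l := by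
    intro l hl
    rw [Finset.mem_range, Nat.lt_succ_iff] at hl
    rw [Nat.choose_symm hl, Nat.cast_sub hl]
  rw [Finset.sum_congr rfl h3] at h2
  have h4 : ∑ l ∈ range (n + 1), ((n : ℝ) - l) * n.choose l
      = (n : ℝ) * 2 ^ n - ∑ l ∈ range (n + 1), (l : ℝ) * n.choose l := by
    rw [eq_sub_iff_add_eq, ← Finset.sum_add_distrib]
    have : ∀ l ∈ range (n+1), ((n : ℝ) - l) * n.choose l + (l : ℝ) * n.choose l
        = (n : ℝ) * n.choose l := by intro l _; ring
    rw [Finset.sum_congr rfl this, ← Finset.mul_sum]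
    norm_cast
    rw [Nat.sum_range_choose]
  rw [h4] at h2
  linarith

lemma my_choose_decay (c : ℝ) (hc : 1/2 < c) (hc1 : c ≤ 1) (n k0 : ℕ) (h0 : c * n ≤ k0) :
    ∀ j, k0 ≤ j → (n.choose j : ℝ) ≤ ((1 - c)/c) ^ (j - k0) * 2 ^ n := by
  have hcpos : (0:ℝ) < c := by linarith
  have hr0 : (0:ℝ) ≤ (1 - c)/c := div_nonneg (by linarith) hcpos.le
  intro j hj
  induction j, hj using Nat.le_induction with
  | base => simpa using (by exact_mod_cast my_choose_le_two_pow n k0 : (n.choose k0 : ℝ) ≤ 2 ^ n)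
  | succ j hj ih =>
    have hstep : (n.choose (j + 1) : ℝ) ≤ (1 - c)/c * n.choose j := by
      rcases le_or_gt n j with h | h
      · rw [Nat.choose_eq_zero_of_lt (by omega)]
        simpa using mul_nonneg hr0 (Nat.cast_nonneg (n.choose j))
      · have hid := Nat.choose_succ_right_eq n j
        have hid' : (n.choose (j+1) : ℝ) * (j + 1) = n.choose j * ((n : ℝ) - j) := by
          have := congrArg (fun x : ℕ => (x : ℝ)) hid
          push_cast [Nat.cast_sub h.le] at this
          exact this
        have hcn : c * n ≤ j := h0.trans (by exact_mod_cast hj)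
        have hnj : ((n : ℝ) - j) ≤ (1 - c)/c * (j + 1) := by
          rw [div_mul_eq_mul_div, le_div_iff₀ hcpos]
          nlinarith [Nat.cast_nonneg (α := ℝ) j]
        have hch : (0:ℝ) ≤ n.choose j := Nat.cast_nonneg _
        have hj1 : (0:ℝ) < (j : ℝ) + 1 := by positivity
        have hmul : (n.choose (j+1) : ℝ) * ((j:ℝ) + 1) ≤ (1 - c)/c * n.choose j * ((j:ℝ) + 1) := by
          rw [hid']
          calc (n.choose j : ℝ) * ((n:ℝ) - j) ≤ n.choose j * ((1-c)/c * ((j:ℝ)+1)) :=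
                mul_le_mul_of_nonneg_left hnj hch
            _ = (1-c)/c * n.choose j * ((j:ℝ)+1) := by ring
        exact le_of_mul_le_mul_right hmul hj1
    calc (n.choose (j+1) : ℝ) ≤ (1 - c)/c * n.choose j := hstep
      _ ≤ (1 - c)/c * (((1 - c)/c) ^ (j - k0) * 2 ^ n) := by
          apply mul_le_mul_of_nonneg_left ih hr0
      _ = ((1 - c)/c) ^ (j + 1 - k0) * 2 ^ n := by
          rw [show j + 1 - k0 = (j - k0) + 1 by omega, pow_succ]; ring

/-- If `n(d) ≥ d` and `d/n(d) → δ ∈ (1/2,1]`, then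
`(1/d)·E[(d - Bin(n(d),1/2))·1{Bin(n(d),1/2) ≤ d}]
  = (1/d)·2^{-n(d)}·∑_{l=0}^{d} (d-l)·binom(n(d),l) → 1 - 1/(2δ)`. -/
theorem stmt_19 (n : ℕ → ℕ) (δ : ℝ) (hn : ∀ d, d ≤ n d)
    (hδ0 : 1 / 2 < δ) (hδ1 : δ ≤ 1)
    (hlim : Tendsto (fun d : ℕ => (d : ℝ) / n d) atTop (nhds δ)) :
    Tendsto (fun d : ℕ =>
        (1 / (d : ℝ)) *
          ((∑ l ∈ Finset.range (d + 1), ((d : ℝ) - l) * Nat.choose (n d) l) / 2 ^ n d))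
      atTop (nhds (1 - 1 / (2 * δ))) := by
  have hδpos : (0:ℝ) < δ := by linarith
  set c : ℝ := (2*δ + 1)/4 with hc_def
  have hc : 1/2 < c := by rw [hc_def]; linarith
  have hc1 : c ≤ 1 := by rw [hc_def]; linarith
  have hcδ : c < δ := by rw [hc_def]; linarith
  have hcpos : (0:ℝ) < c := by linarith
  set c' : ℝ := (c + δ)/2 with hc'_def
  have hcc' : c < c' := by rw [hc'_def]; linarith
  have hc'δ : c' < δ := by rw [hc'_def]; linarith
  have hc'pos : (0:ℝ) < c' := by linarith
  set r : ℝ := (1 - c)/c with hr_def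
  have hr0 : (0:ℝ) ≤ r := div_nonneg (by linarith) hcpos.le
  have hr1 : r < 1 := by rw [hr_def, div_lt_one hcpos]; linarith
  set θ : ℝ := 1 - c/c' with hθ_def
  have hθ : (0:ℝ) < θ := by
    rw [hθ_def, sub_pos, div_lt_one hc'pos]; exact hcc'
  set k0 : ℕ → ℕ := fun d => ⌈c * n d⌉₊ with hk0_def
  set m : ℕ → ℕ := fun d => d + 1 - k0 d with hm_def
  set W : ℕ → ℝ := fun d =>
    ∑ l ∈ Finset.Ico (d+1) (n d + 1), ((l:ℝ) - d) * Nat.choose (n d) l with hW_def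
  set Q : ℕ → ℝ := fun d => (W d / 2 ^ n d) / d with hQ_def
  -- eventual facts
  have hE2 : ∀ᶠ d : ℕ in atTop, c * n d < d := by
    filter_upwards [hlim.eventually (eventually_gt_nhds hcδ), eventually_ge_atTop 1]
      with d hd hd1
    have hn0 : (0:ℝ) < n d := by
      have := hn d; exact_mod_cast Nat.lt_of_lt_of_le hd1 this
    exact (lt_div_iff₀ hn0).mp hd
  have hE3 : ∀ᶠ d : ℕ in atTop, c' * n d ≤ d := by
    filter_upwards [hlim.eventually (eventually_gt_nhds hc'δ), eventually_ge_atTop 1]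
      with d hd hd1
    have hn0 : (0:ℝ) < n d := by
      have := hn d; exact_mod_cast Nat.lt_of_lt_of_le hd1 this
    exact ((lt_div_iff₀ hn0).mp hd).le
  -- m facts
  have hmfacts : ∀ᶠ d : ℕ in atTop, θ * d ≤ (m d : ℝ) := by
    filter_upwards [hE2, hE3] with d hd2 hd3
    have hk0le : k0 d ≤ d := Nat.ceil_le.mpr hd2.le
    have hmcast : (m d : ℝ) = (d:ℝ) + 1 - k0 d := by
      rw [hm_def]
      have : k0 d ≤ d + 1 := by omega
      push_cast [Nat.cast_sub this]; ring
    have hk0ub : (k0 d : ℝ) ≤ c * n d + 1 :=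
      (Nat.ceil_lt_add_one (by positivity)).le
    have hcn : c * n d ≤ (c/c') * d := by
      have : c * (n d : ℝ) = (c/c') * (c' * n d) := by field_simp
      rw [this]
      exact mul_le_mul_of_nonneg_left hd3 (by positivity)
    rw [hmcast, hθ_def]
    nlinarith [Nat.cast_nonneg (α := ℝ) d]
  have hmtop : Tendsto m atTop atTop := by
    rw [← tendsto_natCast_atTop_iff (R := ℝ)]
    apply tendsto_atTop_mono' atTop hmfacts
    exact (tendsto_natCast_atTop_atTop).const_mul_atTop hθ
  -- bound on Q
  have hQ0 : ∀ᶠ d : ℕ in atTop, 0 ≤ Q d := by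
    filter_upwards [eventually_ge_atTop 1] with d _
    apply div_nonneg (div_nonneg _ (by positivity)) (Nat.cast_nonneg d)
    apply Finset.sum_nonneg
    intro l hl
    rw [Finset.mem_Ico] at hl
    have : (d:ℝ) + 1 ≤ l := by exact_mod_cast hl.1
    have := Nat.cast_nonneg (α := ℝ) (Nat.choose (n d) l)
    nlinarith
  have hQle : ∀ᶠ d : ℕ in atTop,
      Q d ≤ (1/(c'^2 * θ)) * ((m d : ℝ) * r ^ (m d)) := by
    filter_upwards [hE2, hE3, hmfacts, eventually_ge_atTop 1] with d hd2 hd3 hmge hd1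
    have hk0le : k0 d ≤ d := Nat.ceil_le.mpr hd2.le
    have hdpos : (0:ℝ) < d := by exact_mod_cast hd1
    have h2pow : (0:ℝ) < 2 ^ n d := by positivity
    have hnled : (n d : ℝ) ≤ d / c' := (le_div_iff₀ hc'pos).mpr (by linarith)
    -- W bound
    have hterm : ∀ l ∈ Finset.Ico (d+1) (n d + 1),
        ((l:ℝ) - d) * Nat.choose (n d) l ≤ (n d : ℝ) * (r ^ (m d) * 2 ^ n d) := by
      intro l hl
      rw [Finset.mem_Ico] at hl
      have hld : d + 1 ≤ l := hl.1
      have hln : l ≤ n d := by omega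
      have h1 : (l:ℝ) - d ≤ n d := by
        have : (l:ℝ) ≤ n d := by exact_mod_cast hln
        have : (0:ℝ) ≤ d := Nat.cast_nonneg d
        linarith
      have h2 : (Nat.choose (n d) l : ℝ) ≤ r ^ (m d) * 2 ^ n d := by
        have hdec := my_choose_decay c hc hc1 (n d) (k0 d) (Nat.le_ceil _) l
          (le_trans hk0le (by omega))
        have hpow : r ^ (l - k0 d) ≤ r ^ (m d) := by
          apply pow_le_pow_of_le_one hr0 hr1.le
          simp only [hm_def]; omega
        calc (Nat.choose (n d) l : ℝ) ≤ r ^ (l - k0 d) * 2 ^ n d := hdec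
          _ ≤ r ^ (m d) * 2 ^ n d := by
              exact mul_le_mul_of_nonneg_right hpow h2pow.le
      have hld' : (0:ℝ) ≤ (l:ℝ) - d := by
        have : (d:ℝ) ≤ l := by exact_mod_cast Nat.le_of_succ_le hld
        linarith
      exact mul_le_mul h1 h2 (Nat.cast_nonneg _) (Nat.cast_nonneg _)
    have hWle : W d ≤ (n d : ℝ) * ((n d : ℝ) * (r ^ (m d) * 2 ^ n d)) := by
      rw [hW_def]
      calc ∑ l ∈ Finset.Ico (d+1) (n d + 1), ((l:ℝ) - d) * Nat.choose (n d) l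
          ≤ ∑ l ∈ Finset.Ico (d+1) (n d + 1), (n d : ℝ) * (r ^ (m d) * 2 ^ n d) :=
            Finset.sum_le_sum hterm
        _ = ((n d + 1) - (d+1) : ℕ) * ((n d : ℝ) * (r ^ (m d) * 2 ^ n d)) := by
            rw [Finset.sum_const, Nat.card_Ico, nsmul_eq_mul]
        _ ≤ (n d : ℝ) * ((n d : ℝ) * (r ^ (m d) * 2 ^ n d)) := by
            apply mul_le_mul_of_nonneg_right _ (by positivity)
            have : ((n d + 1) - (d + 1) : ℕ) ≤ n d := by omega
            exact_mod_cast this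
    -- combine
    rw [hQ_def]
    rw [div_le_iff₀ hdpos, div_le_iff₀ h2pow]
    have hkey : (n d : ℝ) * (n d : ℝ) ≤ (1/(c'^2 * θ)) * (m d : ℝ) * d := by
      have h1 : (n d : ℝ) * (n d : ℝ) ≤ (d/c') * (d/c') := by
        apply mul_le_mul hnled hnled (Nat.cast_nonneg _) (by positivity)
      have h2 : (d/c') * (d/c') = (1/(c'^2 * θ)) * (θ * d) * d := by
        field_simp
      have h3 : (1/(c'^2 * θ)) * (θ * d) * d ≤ (1/(c'^2 * θ)) * (m d : ℝ) * d := by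
        apply mul_le_mul_of_nonneg_right _ hdpos.le
        exact mul_le_mul_of_nonneg_left hmge (by positivity)
      linarith
    calc W d ≤ (n d : ℝ) * ((n d : ℝ) * (r ^ (m d) * 2 ^ n d)) := hWle
      _ = ((n d : ℝ) * (n d : ℝ)) * r ^ (m d) * 2 ^ n d := by ring
      _ ≤ ((1/(c'^2 * θ)) * (m d : ℝ) * d) * r ^ (m d) * 2 ^ n d := by
          apply mul_le_mul_of_nonneg_right _ h2pow.le
          exact mul_le_mul_of_nonneg_right hkey (by positivity)
      _ = 1 / (c' ^ 2 * θ) * ((m d : ℝ) * r ^ m d) * d * 2 ^ n d := by ring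
  -- Q tends to 0
  have hgeo : Tendsto (fun k : ℕ => (k:ℝ) * r ^ k) atTop (nhds 0) := by
    simpa using tendsto_pow_const_mul_const_pow_of_lt_one 1 hr0 hr1
  have hB : Tendsto (fun d : ℕ => (1/(c'^2 * θ)) * ((m d : ℝ) * r ^ (m d)))
      atTop (nhds 0) := by
    have := (hgeo.comp hmtop).const_mul (1/(c'^2 * θ))
    simpa using this
  have hQ : Tendsto Q atTop (nhds 0) := squeeze_zero' hQ0 hQle hB
  -- n d / d → δ⁻¹
  have h1 : Tendsto (fun d : ℕ => (n d : ℝ) / d) atTop (nhds δ⁻¹) := by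
    have := hlim.inv₀ (ne_of_gt hδpos)
    simpa [inv_div] using this
  -- the limit function
  have hg : Tendsto (fun d : ℕ => 1 - (1/2) * ((n d : ℝ)/d) + Q d) atTop
      (nhds (1 - (1/2) * δ⁻¹ + 0)) :=
    (tendsto_const_nhds.sub (h1.const_mul (1/2))).add hQ
  have hval : 1 - (1/2) * δ⁻¹ + 0 = 1 - 1/(2*δ) := by
    field_simp; ring
  rw [hval] at hg
  apply hg.congr'
  filter_upwards [eventually_ge_atTop 1] with d hd1
  have hdpos : (0:ℝ) < d := by exact_mod_cast hd1
  have h2pow : (0:ℝ) < 2 ^ n d := by positivity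
  -- sum splitting
  have hdn : d + 1 ≤ n d + 1 := by have := hn d; omega
  have hsplit := Finset.sum_range_add_sum_Ico
    (fun l => ((d:ℝ) - l) * Nat.choose (n d) l) hdn
  have hfull : ∑ l ∈ Finset.range (n d + 1), ((d:ℝ) - l) * Nat.choose (n d) l
      = (d:ℝ) * 2 ^ n d - (n d : ℝ) * 2 ^ n d / 2 := by
    have hs : ∑ l ∈ Finset.range (n d + 1), ((d:ℝ) - l) * Nat.choose (n d) l
        = (d:ℝ) * (∑ l ∈ Finset.range (n d + 1), (Nat.choose (n d) l : ℝ))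
          - ∑ l ∈ Finset.range (n d + 1), (l:ℝ) * Nat.choose (n d) l := by
      rw [Finset.mul_sum, ← Finset.sum_sub_distrib]
      apply Finset.sum_congr rfl
      intro l _; ring
    rw [hs, my_sum_id_mul_choose]
    have : (∑ l ∈ Finset.range (n d + 1), (Nat.choose (n d) l : ℝ)) = 2 ^ n d := by
      exact_mod_cast congrArg (fun x : ℕ => (x:ℝ)) (Nat.sum_range_choose (n d))
    rw [this]
  have hIco : ∑ l ∈ Finset.Ico (d+1) (n d + 1), ((d:ℝ) - l) * Nat.choose (n d) l
      = - W d := by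
    rw [hW_def, ← Finset.sum_neg_distrib]
    apply Finset.sum_congr rfl
    intro l _; ring
  have hT : ∑ l ∈ Finset.range (d + 1), ((d:ℝ) - l) * Nat.choose (n d) l
      = (d:ℝ) * 2 ^ n d - (n d : ℝ) * 2 ^ n d / 2 + W d := by
    rw [← hfull, ← hsplit, hIco]; ring
  show 1 - (1/2) * ((n d : ℝ)/d) + Q d
      = (1 / (d:ℝ)) * ((∑ l ∈ Finset.range (d + 1), ((d:ℝ) - l) * Nat.choose (n d) l) / 2 ^ n d)
  rw [hT, hQ_def]
  field_simp
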